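/- Let d be a complex number, and let f₄ be the polynomial in three complex variables x, y, z given by f₄ = x⁴y + 2zx²y² + z²y³ + (d²−1)zx³ + (d²−1)z²xy + (d³+2d²+d)z³. Then for every real number λ > 2/3 and every open neighborhood U of the origin in ℂ³, the function (x,y,z) ↦ |f₄(x,y,z)|^{−2λ} is not integrable on U with respect to Lebesgue measure on ℂ³ ≅ ℝ⁶. -/

import Mathlib

open MeasureTheory ENNReal NNReal

private lemma cubic_finite (A B C D : ℂ) (hD : D ≠ 0) :
    {z : ℂ | A * z ^ 3 + B * z ^ 2 + C * z + D = 0}.Finite := by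
  have hq : (Polynomial.C A * Polynomial.X ^ 3 + Polynomial.C B * Polynomial.X ^ 2
      + Polynomial.C C * Polynomial.X + Polynomial.C D : Polynomial ℂ) ≠ 0 := by
    intro h
    have h0 := congrArg (fun q => Polynomial.coeff q 0) h
    simp at h0
    exact hD h0
  refine (Polynomial.finite_setOf_isRoot hq).subset ?_
  intro z hz
  simp only [Set.mem_setOf_eq] at hz ⊢
  simp [Polynomial.IsRoot, hz]

private lemma zset_null (d : ℂ) :
    volume {p : ℂ × ℂ × ℂ |
      p.1 ^ 4 * p.2.1 + 2 * p.2.2 * p.1 ^ 2 * p.2.1 ^ 2 + p.2.2 ^ 2 * p.2.1 ^ 3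
        + (d ^ 2 - 1) * p.2.2 * p.1 ^ 3
        + (d ^ 2 - 1) * p.2.2 ^ 2 * p.1 * p.2.1
        + (d ^ 3 + 2 * d ^ 2 + d) * p.2.2 ^ 3 = 0} = 0 := by
  set F : ℂ × ℂ × ℂ → ℂ := fun p =>
      p.1 ^ 4 * p.2.1 + 2 * p.2.2 * p.1 ^ 2 * p.2.1 ^ 2 + p.2.2 ^ 2 * p.2.1 ^ 3
        + (d ^ 2 - 1) * p.2.2 * p.1 ^ 3
        + (d ^ 2 - 1) * p.2.2 ^ 2 * p.1 * p.2.1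
        + (d ^ 3 + 2 * d ^ 2 + d) * p.2.2 ^ 3 with hF
  have hFc : Continuous F := by fun_prop
  have hmeas : MeasurableSet {p : ℂ × ℂ × ℂ | F p = 0} :=
    hFc.measurable (measurableSet_singleton 0)
  rw [show {p : ℂ × ℂ × ℂ |
      p.1 ^ 4 * p.2.1 + 2 * p.2.2 * p.1 ^ 2 * p.2.1 ^ 2 + p.2.2 ^ 2 * p.2.1 ^ 3
        + (d ^ 2 - 1) * p.2.2 * p.1 ^ 3
        + (d ^ 2 - 1) * p.2.2 ^ 2 * p.1 * p.2.1
        + (d ^ 3 + 2 * d ^ 2 + d) * p.2.2 ^ 3 = 0} = {p | F p = 0} from rfl]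
  rw [Measure.volume_eq_prod _ _, Measure.measure_prod_null hmeas]
  have key : ∀ x : ℂ, x ≠ 0 → volume (Prod.mk x ⁻¹' {p : ℂ × ℂ × ℂ | F p = 0}) = 0 := by
    intro x hx
    have hmeas2 : MeasurableSet (Prod.mk x ⁻¹' {p : ℂ × ℂ × ℂ | F p = 0}) :=
      hmeas.preimage (by fun_prop)
    rw [Measure.volume_eq_prod _ _, Measure.measure_prod_null hmeas2]
    have key2 : ∀ y : ℂ, y ≠ 0 →
        volume (Prod.mk y ⁻¹' (Prod.mk x ⁻¹' {p : ℂ × ℂ × ℂ | F p = 0})) = 0 := by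
      intro y hy
      have hfin : (Prod.mk y ⁻¹' (Prod.mk x ⁻¹' {p : ℂ × ℂ × ℂ | F p = 0})).Finite := by
        refine (cubic_finite (d ^ 3 + 2 * d ^ 2 + d) (y ^ 3 + (d ^ 2 - 1) * x * y)
          (2 * x ^ 2 * y ^ 2 + (d ^ 2 - 1) * x ^ 3) (x ^ 4 * y)
          (mul_ne_zero (pow_ne_zero 4 hx) hy)).subset ?_
        intro z hz
        simp only [Set.mem_preimage, Set.mem_setOf_eq, hF] at hz ⊢
        linear_combination hz
      exact hfin.measure_zero volume
    rw [Filter.eventuallyEq_iff_exists_mem]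
    refine ⟨{y : ℂ | y ≠ 0}, ?_, fun y hy => key2 y hy⟩
    rw [mem_ae_iff]
    have : {y : ℂ | y ≠ 0}ᶜ = {0} := by ext y; simp
    rw [this]
    exact measure_singleton 0
  rw [Filter.eventuallyEq_iff_exists_mem]
  refine ⟨{x : ℂ | x ≠ 0}, ?_, fun x hx => key x hx⟩
  rw [mem_ae_iff]
  have : {x : ℂ | x ≠ 0}ᶜ = {0} := by ext x; simp
  rw [this]
  exact measure_singleton 0

private lemma abs_bound (d : ℂ) (t : ℝ) (ht : 0 < t) (x y z : ℂ)
    (hx : norm x ≤ t ^ 2) (hy : norm y ≤ t) (hz : norm z ≤ t ^ 3) :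
    norm (x ^ 4 * y + 2 * z * x ^ 2 * y ^ 2 + z ^ 2 * y ^ 3
        + (d ^ 2 - 1) * z * x ^ 3 + (d ^ 2 - 1) * z ^ 2 * x * y + (d ^ 3 + 2 * d ^ 2 + d) * z ^ 3)
      ≤ (4 + 2 * norm (d ^ 2 - 1) + norm (d ^ 3 + 2 * d ^ 2 + d)) * t ^ 9 := by
  have hxn := norm_nonneg x
  have hyn := norm_nonneg y
  have hzn := norm_nonneg z
  have hA : norm (x ^ 4 * y) ≤ t ^ 9 := by
    rw [norm_mul, norm_pow]
    calc norm x ^ 4 * norm y ≤ (t ^ 2) ^ 4 * t := by gcongr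
    _ = t ^ 9 := by ring
  have hB : norm (2 * z * x ^ 2 * y ^ 2) ≤ 2 * t ^ 9 := by
    rw [norm_mul, norm_mul, norm_mul, norm_pow, norm_pow, Complex.norm_two]
    calc 2 * norm z * norm x ^ 2 * norm y ^ 2
        ≤ 2 * t ^ 3 * (t ^ 2) ^ 2 * t ^ 2 := by gcongr
    _ = 2 * t ^ 9 := by ring
  have hC : norm (z ^ 2 * y ^ 3) ≤ t ^ 9 := by
    rw [norm_mul, norm_pow, norm_pow]
    calc norm z ^ 2 * norm y ^ 3 ≤ (t ^ 3) ^ 2 * t ^ 3 := by gcongr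
    _ = t ^ 9 := by ring
  have hD : norm ((d ^ 2 - 1) * z * x ^ 3) ≤ norm (d ^ 2 - 1) * t ^ 9 := by
    rw [norm_mul, norm_mul, norm_pow]
    calc norm (d ^ 2 - 1) * norm z * norm x ^ 3
        ≤ norm (d ^ 2 - 1) * t ^ 3 * (t ^ 2) ^ 3 := by gcongr
    _ = norm (d ^ 2 - 1) * t ^ 9 := by ring
  have hE : norm ((d ^ 2 - 1) * z ^ 2 * x * y) ≤ norm (d ^ 2 - 1) * t ^ 9 := by
    rw [norm_mul, norm_mul, norm_mul, norm_pow]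
    calc norm (d ^ 2 - 1) * norm z ^ 2 * norm x * norm y
        ≤ norm (d ^ 2 - 1) * (t ^ 3) ^ 2 * t ^ 2 * t := by gcongr
    _ = norm (d ^ 2 - 1) * t ^ 9 := by ring
  have hG : norm ((d ^ 3 + 2 * d ^ 2 + d) * z ^ 3)
      ≤ norm (d ^ 3 + 2 * d ^ 2 + d) * t ^ 9 := by
    rw [norm_mul, norm_pow]
    calc norm (d ^ 3 + 2 * d ^ 2 + d) * norm z ^ 3
        ≤ norm (d ^ 3 + 2 * d ^ 2 + d) * (t ^ 3) ^ 3 := by gcongr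
    _ = norm (d ^ 3 + 2 * d ^ 2 + d) * t ^ 9 := by ring
  have t1 := norm_add_le (x ^ 4 * y + 2 * z * x ^ 2 * y ^ 2 + z ^ 2 * y ^ 3
      + (d ^ 2 - 1) * z * x ^ 3 + (d ^ 2 - 1) * z ^ 2 * x * y) ((d ^ 3 + 2 * d ^ 2 + d) * z ^ 3)
  have t2 := norm_add_le (x ^ 4 * y + 2 * z * x ^ 2 * y ^ 2 + z ^ 2 * y ^ 3
      + (d ^ 2 - 1) * z * x ^ 3) ((d ^ 2 - 1) * z ^ 2 * x * y)
  have t3 := norm_add_le (x ^ 4 * y + 2 * z * x ^ 2 * y ^ 2 + z ^ 2 * y ^ 3)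
      ((d ^ 2 - 1) * z * x ^ 3)
  have t4 := norm_add_le (x ^ 4 * y + 2 * z * x ^ 2 * y ^ 2) (z ^ 2 * y ^ 3)
  have t5 := norm_add_le (x ^ 4 * y) (2 * z * x ^ 2 * y ^ 2)
  nlinarith [hA, hB, hC, hD, hE, hG, t1, t2, t3, t4, t5]

theorem stmt_9 (d : ℂ) (lam : ℝ) (hlam : 2 / 3 < lam)
    (U : Set (ℂ × ℂ × ℂ)) (hU : IsOpen U) (h0 : ((0 : ℂ), (0 : ℂ), (0 : ℂ)) ∈ U) :
    ¬ IntegrableOn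
      (fun p : ℂ × ℂ × ℂ =>
        norm
          (p.1 ^ 4 * p.2.1 + 2 * p.2.2 * p.1 ^ 2 * p.2.1 ^ 2 + p.2.2 ^ 2 * p.2.1 ^ 3
            + (d ^ 2 - 1) * p.2.2 * p.1 ^ 3
            + (d ^ 2 - 1) * p.2.2 ^ 2 * p.1 * p.2.1
            + (d ^ 3 + 2 * d ^ 2 + d) * p.2.2 ^ 3) ^ (-2 * lam))
      U volume := by
  intro h
  set F : ℂ × ℂ × ℂ → ℂ := fun p =>
      p.1 ^ 4 * p.2.1 + 2 * p.2.2 * p.1 ^ 2 * p.2.1 ^ 2 + p.2.2 ^ 2 * p.2.1 ^ 3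
        + (d ^ 2 - 1) * p.2.2 * p.1 ^ 3
        + (d ^ 2 - 1) * p.2.2 ^ 2 * p.1 * p.2.1
        + (d ^ 3 + 2 * d ^ 2 + d) * p.2.2 ^ 3 with hF
  set g : ℂ × ℂ × ℂ → ℝ := fun p => norm (F p) ^ (-2 * lam) with hg
  set C : ℝ := 4 + 2 * norm (d ^ 2 - 1) + norm (d ^ 3 + 2 * d ^ 2 + d) with hCdef
  have hC : 0 < C := by positivity
  obtain ⟨ε, hε, hball⟩ := Metric.isOpen_iff.mp hU _ h0
  set M : ℝ≥0∞ := ∫⁻ p in U, (‖g p‖₊ : ℝ≥0∞) ∂volume with hMdef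
  have hM : M ≠ ⊤ := h.2.ne
  have hFc : Continuous F := by fun_prop
  have hgm : Measurable fun p => ((‖g p‖₊ : ℝ≥0∞)) :=
    (((continuous_norm.comp hFc).measurable).pow measurable_const).enorm
  set Z : Set (ℂ × ℂ × ℂ) := {p | F p = 0} with hZdef
  have hZ : volume Z = 0 := zset_null d
  -- main claim
  have claim : ∀ t : ℝ, 0 < t → t ≤ 1 → t < ε →
      ENNReal.ofReal ((C * t ^ 9) ^ (-2 * lam) * (t ^ 12 * Real.pi ^ 3)) ≤ M := by
    intro t ht ht1 htε
    set B : Set (ℂ × ℂ × ℂ) :=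
      Metric.ball (0 : ℂ) (t ^ 2) ×ˢ (Metric.ball (0 : ℂ) t ×ˢ Metric.ball (0 : ℂ) (t ^ 3)) with hBdef
    have hBU : B ⊆ U := by
      intro p hp
      obtain ⟨h1, h2, h3⟩ := hp
      apply hball
      rw [Metric.mem_ball] at h1 h2 h3 ⊢
      rw [Prod.dist_eq]
      have ht2 : t ^ 2 ≤ t := by nlinarith
      have ht3 : t ^ 3 ≤ t := by nlinarith
      refine max_lt (lt_of_lt_of_le h1 (ht2.trans htε.le)) ?_
      rw [Prod.dist_eq]
      exact max_lt (h2.trans_le htε.le) (lt_of_lt_of_le h3 (ht3.trans htε.le))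
    have hvolB : volume B = ENNReal.ofReal (t ^ 12 * Real.pi ^ 3) := by
      rw [hBdef, Measure.volume_eq_prod, Measure.prod_prod, Measure.volume_eq_prod,
        Measure.prod_prod, Complex.volume_ball, Complex.volume_ball, Complex.volume_ball]
      rw [← ENNReal.ofReal_pow (by positivity), ← ENNReal.ofReal_pow (by positivity),
        ← ENNReal.ofReal_pow (by positivity)]
      rw [show ((NNReal.pi : ℝ≥0∞)) = ENNReal.ofReal Real.pi by
        rw [← NNReal.coe_real_pi, ENNReal.ofReal_coe_nnreal]]
      rw [← ENNReal.ofReal_mul (by positivity), ← ENNReal.ofReal_mul (by positivity),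
        ← ENNReal.ofReal_mul (by positivity), ← ENNReal.ofReal_mul (by positivity),
        ← ENNReal.ofReal_mul (by positivity)]
      congr 1
      ring
    have hpt : ∀ p ∈ B \ Z, ENNReal.ofReal ((C * t ^ 9) ^ (-2 * lam)) ≤ (‖g p‖₊ : ℝ≥0∞) := by
      intro p hp
      obtain ⟨hpB, hpZ⟩ := hp
      obtain ⟨h1, h2, h3⟩ := hpB
      rw [mem_ball_zero_iff] at h1 h2 h3
      have habs : norm (F p) ≤ C * t ^ 9 := by
        have := abs_bound d t ht p.1 p.2.1 p.2.2
          (le_of_lt (by simpa using h1))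
          (le_of_lt (by simpa using h2))
          (le_of_lt (by simpa using h3))
        simpa [hF, hCdef] using this
      have hpos : 0 < norm (F p) := by
        rw [norm_pos_iff]
        exact hpZ
      have hmono : (C * t ^ 9) ^ (-2 * lam) ≤ norm (F p) ^ (-2 * lam) :=
        Real.rpow_le_rpow_of_nonpos hpos habs (by linarith)
      rw [show ((‖g p‖₊ : ℝ≥0∞)) = ENNReal.ofReal (g p) from
        (Real.enorm_eq_ofReal (Real.rpow_nonneg (norm_nonneg _) _))]
      exact ENNReal.ofReal_le_ofReal hmono
    have hBmeas : MeasurableSet (B \ Z) :=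
      (Metric.isOpen_ball.prod (Metric.isOpen_ball.prod Metric.isOpen_ball)).measurableSet.diff
        (hFc.measurable (measurableSet_singleton 0))
    calc ENNReal.ofReal ((C * t ^ 9) ^ (-2 * lam) * (t ^ 12 * Real.pi ^ 3))
        = ENNReal.ofReal ((C * t ^ 9) ^ (-2 * lam)) * volume (B \ Z) := by
          rw [measure_diff_null hZ, hvolB, ← ENNReal.ofReal_mul (by positivity)]
      _ = ∫⁻ _ in B \ Z, ENNReal.ofReal ((C * t ^ 9) ^ (-2 * lam)) ∂volume := by
          rw [setLIntegral_const, mul_comm]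
      _ ≤ ∫⁻ p in B \ Z, (‖g p‖₊ : ℝ≥0∞) ∂volume := setLIntegral_mono hgm hpt
      _ ≤ M := lintegral_mono_set (Set.diff_subset.trans hBU)
  -- now derive a contradiction
  set Mr : ℝ := M.toReal with hMr
  have hMr0 : 0 ≤ Mr := ENNReal.toReal_nonneg
  set s : ℝ := 18 * lam - 12 with hsdef
  have hs : 0 < s := by
    rw [hsdef]; linarith
  set K : ℝ := C ^ (-2 * lam) * Real.pi ^ 3 with hKdef
  have hK : 0 < K := by
    have := Real.rpow_pos_of_pos hC (-2 * lam)
    positivity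
  set a : ℝ := (K / (Mr + 1)) ^ s⁻¹ with hadef
  have ha : 0 < a := Real.rpow_pos_of_pos (by positivity) _
  set t : ℝ := min 1 (min ε a) / 2 with htdef
  have ht : 0 < t := by
    have : 0 < min 1 (min ε a) := lt_min one_pos (lt_min hε ha)
    positivity
  have ht1 : t ≤ 1 := by
    have : min 1 (min ε a) ≤ 1 := min_le_left _ _
    rw [htdef]; linarith
  have htε : t < ε := by
    have : min 1 (min ε a) ≤ ε := (min_le_right _ _).trans (min_le_left _ _)
    rw [htdef]; linarith
  have hta : t < a := by
    have : min 1 (min ε a) ≤ a := (min_le_right _ _).trans (min_le_right _ _)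
    rw [htdef]; linarith
  have hclaim := claim t ht ht1 htε
  -- convert to real inequality
  have hreal : (C * t ^ 9) ^ (-2 * lam) * (t ^ 12 * Real.pi ^ 3) ≤ Mr := by
    rw [← ENNReal.ofReal_le_iff_le_toReal hM] at *
    exact hclaim
  -- rewrite LHS as K * t ^ (-s)
  have hrw : (C * t ^ 9) ^ (-2 * lam) * (t ^ 12 * Real.pi ^ 3) = K * t ^ (-s) := by
    rw [Real.mul_rpow hC.le (by positivity)]
    rw [← Real.rpow_natCast t 9, ← Real.rpow_natCast t 12, ← Real.rpow_mul ht.le]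
    rw [show C ^ (-2 * lam) * t ^ (((9 : ℕ) : ℝ) * (-2 * lam)) * (t ^ (((12 : ℕ) : ℝ)) * Real.pi ^ 3)
        = C ^ (-2 * lam) * Real.pi ^ 3 * (t ^ (((9 : ℕ) : ℝ) * (-2 * lam)) * t ^ (((12 : ℕ) : ℝ))) by ring]
    rw [← Real.rpow_add ht]
    have hexp : ((9 : ℕ) : ℝ) * (-2 * lam) + ((12 : ℕ) : ℝ) = -s := by
      rw [hsdef]; push_cast; ring
    rw [hexp, hKdef]
  rw [hrw] at hreal
  -- t ^ s < a ^ s = K / (Mr + 1)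
  have hts : t ^ s < K / (Mr + 1) := by
    have h1 : t ^ s < a ^ s := Real.rpow_lt_rpow ht.le hta hs
    have h2 : a ^ s = K / (Mr + 1) := by
      rw [hadef, ← Real.rpow_mul (by positivity), inv_mul_cancel₀ hs.ne', Real.rpow_one]
    linarith
  have htspos : 0 < t ^ s := Real.rpow_pos_of_pos ht _
  have hKt : K * t ^ (-s) = K / t ^ s := by
    rw [Real.rpow_neg ht.le, div_eq_mul_inv]
  rw [hKt] at hreal
  have hfinal : Mr + 1 < K / t ^ s := by
    rw [lt_div_iff₀ htspos]
    calc (Mr + 1) * t ^ s < (Mr + 1) * (K / (Mr + 1)) := by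
          apply mul_lt_mul_of_pos_left hts (by positivity)
      _ = K := by field_simp
  linarith
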